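/- arXiv:1607.07051 — 3 statements merged into one kernel-verified Lean document; each statement's English description precedes it below -/
import Mathlib

section
/- Let u_ε(x) = log((ε²+r₀²)²/(ε²+|x−x₀|²)²) on B_{r₀}(x₀) and u_ε = 0 on Ω∖B_{r₀}(x₀), where B_{r₀}(x₀) ⊂ Ω. Then ∫_Ω |∇u_ε|² dx = 16π log(1/ε²) + O(1) and log(∫_Ω e^{u_ε} dx) = log(1/ε²) + O(1) as ε → 0. Consequently I_λ(u_ε) = (8π−λ) log(1/ε²) + O(1), and in particular I_λ(u_ε) → −∞ as ε → 0 for λ > 8π. -/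
open MeasureTheory Real Filter Topology Classical

open Metric in
private lemma polar2 (x₀ : EuclideanSpace ℝ (Fin 2)) (f : ℝ → ℝ) :
    ∫ x : EuclideanSpace ℝ (Fin 2), f ‖x - x₀‖ =
      2 * π * ∫ r in Set.Ioi (0:ℝ), r * f r := by
  rw [show (∫ x : EuclideanSpace ℝ (Fin 2), f ‖x - x₀‖) = ∫ x : EuclideanSpace ℝ (Fin 2), f ‖x‖
    from integral_sub_right_eq_self (fun x => f ‖x‖) x₀]
  rw [integral_fun_norm_addHaar volume f]
  have hvol : (volume (ball (0 : EuclideanSpace ℝ (Fin 2)) 1)).toReal = π := by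
    rw [EuclideanSpace.volume_ball]
    norm_num [Real.Gamma_two, Real.sq_sqrt Real.pi_nonneg, Real.pi_nonneg]
  rw [finrank_euclideanSpace_fin, measureReal_def, hvol]
  rw [show (2-1 : ℕ) = 1 from rfl]
  simp only [nsmul_eq_mul, smul_eq_mul, Nat.cast_ofNat, pow_one]
  ring

open Metric in
private lemma ball_polar (x₀ : EuclideanSpace ℝ (Fin 2)) (r₀ : ℝ) (g : ℝ → ℝ) :
    ∫ x in ball x₀ r₀, g ‖x - x₀‖ = 2 * π * ∫ r in Set.Ioo (0:ℝ) r₀, r * g r := by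
  rw [← integral_indicator measurableSet_ball]
  have h1 : (ball x₀ r₀).indicator (fun x => g ‖x - x₀‖)
      = fun x => (fun r => if r < r₀ then g r else 0) ‖x - x₀‖ := by
    funext x
    simp [Set.indicator_apply, Metric.mem_ball, dist_eq_norm]
  rw [h1, polar2]
  congr 1
  have h2 : ∀ r : ℝ, r * (if r < r₀ then g r else 0)
      = (Set.Iio r₀).indicator (fun r => r * g r) r := by
    intro r; by_cases h : r < r₀ <;> simp [Set.indicator_apply, h]
  simp only [h2]
  rw [setIntegral_indicator measurableSet_Iio, Set.Ioi_inter_Iio]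

private lemma ftc_pair (ε r₀ : ℝ) (hε : 0 < ε) (hr : 0 < r₀) :
    (∫ r in Set.Ioo (0:ℝ) r₀, r * (16 * r^2 / ((ε^2 + r^2)^2)))
      = 8 * (Real.log (ε^2+r₀^2) - Real.log (ε^2) + ε^2/(ε^2+r₀^2) - 1) := by
  have hpos : ∀ x : ℝ, (0:ℝ) < ε^2 + x^2 := fun x => by positivity
  have hderiv : ∀ x ∈ Set.uIcc (0:ℝ) r₀,
      HasDerivAt (fun r => 8 * (Real.log (ε^2+r^2) + ε^2/(ε^2+r^2)))
        (x * (16 * x^2 / ((ε^2 + x^2)^2))) x := by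
    intro x _
    have h1 : HasDerivAt (fun r : ℝ => ε^2 + r^2) (2*x) x := by
      simpa using (hasDerivAt_pow 2 x).const_add (ε^2)
    have h2 : HasDerivAt (fun r : ℝ => Real.log (ε^2+r^2)) (2*x/(ε^2+x^2)) x :=
      h1.log (hpos x).ne'
    have h3 : HasDerivAt (fun r : ℝ => ε^2/(ε^2+r^2)) (ε^2 * (-(2*x)/(ε^2+x^2)^2)) x :=
      (h1.inv (hpos x).ne').const_mul (ε^2)
    have := ((h2.add h3).const_mul 8)
    refine this.congr_deriv ?_
    field_simp
    ring
  have hcont : ContinuousOn (fun x : ℝ => x * (16 * x^2 / ((ε^2 + x^2)^2)))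
      (Set.uIcc (0:ℝ) r₀) := by
    apply ContinuousOn.mul continuousOn_id
    apply ContinuousOn.div (by fun_prop) (by fun_prop)
    intro x _; positivity
  rw [← integral_Ioc_eq_integral_Ioo, ← intervalIntegral.integral_of_le hr.le]
  rw [intervalIntegral.integral_eq_sub_of_hasDerivAt hderiv
    (hcont.intervalIntegrable)]
  simp only [zero_pow, ne_eq, OfNat.ofNat_ne_zero, not_false_eq_true, add_zero]
  rw [div_self (by positivity : (ε^2:ℝ) ≠ 0)]
  ring

private lemma ftc_exp (ε r₀ : ℝ) (hε : 0 < ε) (hr : 0 < r₀) :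
    (∫ r in Set.Ioo (0:ℝ) r₀, r * ((ε^2+r₀^2)^2 / ((ε^2 + r^2)^2)))
      = r₀^2*(ε^2+r₀^2)/(2*ε^2) := by
  have hpos : ∀ x : ℝ, (0:ℝ) < ε^2 + x^2 := fun x => by positivity
  have hderiv : ∀ x ∈ Set.uIcc (0:ℝ) r₀,
      HasDerivAt (fun r => -((ε^2+r₀^2)^2/2) * (ε^2+r^2)⁻¹)
        (x * ((ε^2+r₀^2)^2 / ((ε^2 + x^2)^2))) x := by
    intro x _
    have h1 : HasDerivAt (fun r : ℝ => ε^2 + r^2) (2*x) x := by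
      simpa using (hasDerivAt_pow 2 x).const_add (ε^2)
    have := (h1.inv (hpos x).ne').const_mul (-((ε^2+r₀^2)^2/2))
    refine this.congr_deriv ?_
    field_simp
  have hcont : ContinuousOn (fun x : ℝ => x * ((ε^2+r₀^2)^2 / ((ε^2 + x^2)^2)))
      (Set.uIcc (0:ℝ) r₀) := by
    apply ContinuousOn.mul continuousOn_id
    apply ContinuousOn.div (by fun_prop) (by fun_prop)
    intro x _; positivity
  rw [← integral_Ioc_eq_integral_Ioo, ← intervalIntegral.integral_of_le hr.le]
  rw [intervalIntegral.integral_eq_sub_of_hasDerivAt hderiv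
    (hcont.intervalIntegrable)]
  have h0 : (0:ℝ) < ε^2 + r₀^2 := by positivity
  field_simp
  ring

open Metric in
private lemma energy_eq (x₀ : EuclideanSpace ℝ (Fin 2)) (r₀ ε : ℝ) (hr : 0 < r₀) (hε : 0 < ε) :
    (∫ x in ball x₀ r₀, 16 * ‖x - x₀‖ ^ 2 / ((ε ^ 2 + ‖x - x₀‖ ^ 2) ^ 2))
      = 16*π*(Real.log (ε^2+r₀^2) - Real.log (ε^2) + ε^2/(ε^2+r₀^2) - 1) := by
  rw [ball_polar x₀ r₀ (fun r => 16 * r^2 / ((ε^2 + r^2)^2)), ftc_pair ε r₀ hε hr]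
  ring

open Metric in
private lemma expball_eq (x₀ : EuclideanSpace ℝ (Fin 2)) (r₀ ε : ℝ) (hr : 0 < r₀) (hε : 0 < ε) :
    (∫ x in ball x₀ r₀, (ε^2+r₀^2)^2 / ((ε^2 + ‖x - x₀‖^2)^2))
      = π * (r₀^2*(ε^2+r₀^2)/ε^2) := by
  rw [ball_polar x₀ r₀ (fun r => (ε^2+r₀^2)^2 / ((ε^2 + r^2)^2)), ftc_exp ε r₀ hε hr]
  field_simp

open Metric in
private lemma expint_eq (Ω : Set (EuclideanSpace ℝ (Fin 2))) (x₀ : EuclideanSpace ℝ (Fin 2))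
    (r₀ ε : ℝ) (hr : 0 < r₀) (hε : 0 < ε) (hball : ball x₀ r₀ ⊆ Ω)
    (hΩm : MeasurableSet Ω) (hΩb : Bornology.IsBounded Ω) :
    (∫ x in Ω, Real.exp
        (if x ∈ ball x₀ r₀ then
          Real.log ((ε ^ 2 + r₀ ^ 2) ^ 2 / (ε ^ 2 + ‖x - x₀‖ ^ 2) ^ 2)
         else 0))
      = π * (r₀^2*(ε^2+r₀^2)/ε^2) + (volume (Ω \ ball x₀ r₀)).toReal := by
  set φ : EuclideanSpace ℝ (Fin 2) → ℝ := fun x => Real.exp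
      (if x ∈ ball x₀ r₀ then
        Real.log ((ε ^ 2 + r₀ ^ 2) ^ 2 / (ε ^ 2 + ‖x - x₀‖ ^ 2) ^ 2)
       else 0) with hφ
  have hqc : Continuous (fun x : EuclideanSpace ℝ (Fin 2) =>
      (ε ^ 2 + r₀ ^ 2) ^ 2 / (ε ^ 2 + ‖x - x₀‖ ^ 2) ^ 2) :=
    Continuous.div continuous_const (by fun_prop) (fun x => by positivity)
  have hmeas : Measurable φ :=
    Real.measurable_exp.comp (Measurable.ite measurableSet_ball
      (Real.measurable_log.comp hqc.measurable) measurable_const)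
  have hbd : ∀ x, ‖φ x‖ ≤ max ((ε^2+r₀^2)^2/ε^4) 1 := by
    intro x
    rw [hφ]
    by_cases hx : x ∈ ball x₀ r₀
    · simp only [hx, if_pos]
      rw [Real.norm_eq_abs, abs_of_pos (Real.exp_pos _),
        Real.exp_log (by positivity)]
      refine le_max_of_le_left ?_
      have hle : ε^2 ≤ ε ^ 2 + ‖x - x₀‖ ^ 2 := le_add_of_nonneg_right (by positivity)
      have h1 : ε^4 ≤ (ε ^ 2 + ‖x - x₀‖ ^ 2) ^ 2 := by
        calc ε^4 = (ε^2)^2 := by ring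
        _ ≤ _ := by gcongr
      gcongr
    · simp [hx]
  have hInt : IntegrableOn φ Ω := by
    apply Measure.integrableOn_of_bounded hΩb.measure_lt_top.ne
      hmeas.aestronglyMeasurable
    exact Filter.Eventually.of_forall hbd
  have hsplit : (∫ x in Ω, φ x)
      = (∫ x in ball x₀ r₀, φ x) + ∫ x in Ω \ ball x₀ r₀, φ x := by
    rw [← setIntegral_union Set.disjoint_sdiff_right (hΩm.diff measurableSet_ball)
      (hInt.mono_set hball) (hInt.mono_set Set.diff_subset),
      Set.union_diff_cancel hball]
  have h1 : (∫ x in ball x₀ r₀, φ x)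
      = ∫ x in ball x₀ r₀, (ε^2+r₀^2)^2 / ((ε^2 + ‖x - x₀‖^2)^2) := by
    refine setIntegral_congr_fun measurableSet_ball (fun x hx => ?_)
    rw [hφ]
    simp only [hx, if_pos]
    exact Real.exp_log (by positivity)
  have h2 : (∫ x in Ω \ ball x₀ r₀, φ x) = (volume (Ω \ ball x₀ r₀)).toReal := by
    have h3 : (∫ x in Ω \ ball x₀ r₀, φ x) = ∫ _x in Ω \ ball x₀ r₀, (1:ℝ) := by
      refine setIntegral_congr_fun (hΩm.diff measurableSet_ball) (fun x hx => ?_)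
      rw [hφ]
      simp [hx.2]
    rw [h3, setIntegral_const]
    simp
    rfl
  rw [hsplit, h1, h2, expball_eq x₀ r₀ ε hr hε]

private lemma abs_log_le (a b x : ℝ) (ha : 0 < a) (hax : a ≤ x) (hxb : x ≤ b) :
    |Real.log x| ≤ |Real.log a| + |Real.log b| := by
  have h1 : Real.log a ≤ Real.log x := Real.log_le_log ha hax
  have h2 : Real.log x ≤ Real.log b := Real.log_le_log (lt_of_lt_of_le ha hax) hxb
  rw [abs_le]
  constructor
  · have := neg_abs_le (Real.log a)
    have := abs_nonneg (Real.log b)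
    linarith
  · have := le_abs_self (Real.log b)
    have := abs_nonneg (Real.log a)
    linarith

set_option maxHeartbeats 1000000 in
/-- For the Liouville-type test functions
u_ε(x) = log((ε²+r₀²)²/(ε²+|x−x₀|²)²) on B_{r₀}(x₀), u_ε = 0 elsewhere
(whose gradient squared modulus is 16|x−x₀|²/(ε²+|x−x₀|²)² on the ball, 0 outside),
one has ∫_Ω |∇u_ε|² = 16π log(1/ε²) + O(1), log ∫_Ω e^{u_ε} = log(1/ε²) + O(1),
hence I_λ(u_ε) = (8π−λ) log(1/ε²) + O(1); in particular I_λ(u_ε) → −∞ as ε → 0⁺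
when λ > 8π. -/
theorem stmt6 (Ω : Set (EuclideanSpace ℝ (Fin 2)))
    (x₀ : EuclideanSpace ℝ (Fin 2)) (r₀ : ℝ) (hr₀ : 0 < r₀)
    (hball : Metric.ball x₀ r₀ ⊆ Ω) (hΩm : MeasurableSet Ω)
    (hΩb : Bornology.IsBounded Ω) (lam : ℝ) :
    (∃ C > (0:ℝ), ∀ ε ∈ Set.Ioo (0:ℝ) 1,
      |(∫ x in Metric.ball x₀ r₀,
          16 * ‖x - x₀‖ ^ 2 / ((ε ^ 2 + ‖x - x₀‖ ^ 2) ^ 2))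
        - 16 * Real.pi * Real.log (1 / ε ^ 2)| ≤ C ∧
      |Real.log (∫ x in Ω, Real.exp
            (if x ∈ Metric.ball x₀ r₀ then
              Real.log ((ε ^ 2 + r₀ ^ 2) ^ 2 / (ε ^ 2 + ‖x - x₀‖ ^ 2) ^ 2)
             else 0))
        - Real.log (1 / ε ^ 2)| ≤ C ∧
      |((1 / 2) * (∫ x in Metric.ball x₀ r₀,
            16 * ‖x - x₀‖ ^ 2 / ((ε ^ 2 + ‖x - x₀‖ ^ 2) ^ 2))
          - lam * Real.log (∫ x in Ω, Real.exp
              (if x ∈ Metric.ball x₀ r₀ then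
                Real.log ((ε ^ 2 + r₀ ^ 2) ^ 2 / (ε ^ 2 + ‖x - x₀‖ ^ 2) ^ 2)
               else 0)))
        - (8 * Real.pi - lam) * Real.log (1 / ε ^ 2)| ≤ C) ∧
    (8 * Real.pi < lam →
      Tendsto (fun ε : ℝ =>
          (1 / 2) * (∫ x in Metric.ball x₀ r₀,
              16 * ‖x - x₀‖ ^ 2 / ((ε ^ 2 + ‖x - x₀‖ ^ 2) ^ 2))
            - lam * Real.log (∫ x in Ω, Real.exp
                (if x ∈ Metric.ball x₀ r₀ then
                  Real.log ((ε ^ 2 + r₀ ^ 2) ^ 2 / (ε ^ 2 + ‖x - x₀‖ ^ 2) ^ 2)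
                 else 0)))
        (nhdsWithin 0 (Set.Ioi 0)) atBot) := by
  set m := (volume (Ω \ Metric.ball x₀ r₀)).toReal with hm
  have hm0 : 0 ≤ m := ENNReal.toReal_nonneg
  set C₁ : ℝ := 16*π*(|Real.log (r₀^2)| + |Real.log (1+r₀^2)| + 1) with hC₁
  set aa : ℝ := π * r₀^4 with haa
  set bb : ℝ := π*r₀^2*(1+r₀^2) + m with hbb
  have haa0 : 0 < aa := by rw [haa]; positivity
  have hbb0 : 0 < bb := by rw [hbb]; nlinarith [pi_pos, sq_nonneg r₀]
  set C₂ : ℝ := |Real.log aa| + |Real.log bb| with hC₂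
  have hC₁pos : 0 < C₁ := by rw [hC₁]; positivity
  have hC₂0 : 0 ≤ C₂ := by rw [hC₂]; positivity
  set C : ℝ := C₁ + C₂ + (C₁/2 + |lam| * C₂) + 1 with hC
  clear_value m aa bb C₁ C₂ C
  have hCpos : 0 < C := by
    have h := mul_nonneg (abs_nonneg lam) hC₂0
    linarith
  -- per-ε energy bound
  have hEN : ∀ ε ∈ Set.Ioo (0:ℝ) 1,
      |(∫ x in Metric.ball x₀ r₀,
          16 * ‖x - x₀‖ ^ 2 / ((ε ^ 2 + ‖x - x₀‖ ^ 2) ^ 2))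
        - 16 * π * Real.log (1 / ε ^ 2)| ≤ C₁ := by
    rintro ε ⟨hε0, hε1⟩
    rw [energy_eq x₀ r₀ ε hr₀ hε0, one_div, Real.log_inv]
    have hq0 : (0:ℝ) ≤ ε^2/(ε^2+r₀^2) := by positivity
    have hq1 : ε^2/(ε^2+r₀^2) ≤ 1 := by
      rw [div_le_one (by positivity)]; nlinarith
    have hlog : |Real.log (ε^2+r₀^2)| ≤ |Real.log (r₀^2)| + |Real.log (1+r₀^2)| :=
      abs_log_le _ _ _ (by positivity) (by nlinarith) (by nlinarith)
    have heq : 16*π*(Real.log (ε^2+r₀^2) - Real.log (ε^2) + ε^2/(ε^2+r₀^2) - 1)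
        - 16*π*(-Real.log (ε^2))
        = 16*π*(Real.log (ε^2+r₀^2) + (ε^2/(ε^2+r₀^2) - 1)) := by ring
    rw [heq, abs_mul, abs_of_pos (by positivity : (0:ℝ) < 16*π)]
    have hX : |Real.log (ε^2+r₀^2) + (ε^2/(ε^2+r₀^2) - 1)|
        ≤ |Real.log (r₀^2)| + |Real.log (1+r₀^2)| + 1 := by
      calc |Real.log (ε^2+r₀^2) + (ε^2/(ε^2+r₀^2) - 1)|
          ≤ |Real.log (ε^2+r₀^2)| + |ε^2/(ε^2+r₀^2) - 1| := abs_add_le _ _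
        _ ≤ |Real.log (r₀^2)| + |Real.log (1+r₀^2)| + 1 := by
            have : |ε^2/(ε^2+r₀^2) - 1| ≤ 1 := by
              rw [abs_le]; constructor <;> linarith
            linarith
    rw [hC₁]
    exact mul_le_mul_of_nonneg_left hX (by positivity)
  -- per-ε exp-integral bound
  have hEE : ∀ ε ∈ Set.Ioo (0:ℝ) 1,
      |Real.log (∫ x in Ω, Real.exp
            (if x ∈ Metric.ball x₀ r₀ then
              Real.log ((ε ^ 2 + r₀ ^ 2) ^ 2 / (ε ^ 2 + ‖x - x₀‖ ^ 2) ^ 2)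
             else 0))
        - Real.log (1 / ε ^ 2)| ≤ C₂ := by
    rintro ε ⟨hε0, hε1⟩
    rw [expint_eq Ω x₀ r₀ ε hr₀ hε0 hball hΩm hΩb, ← hm]
    set E : ℝ := π * (r₀^2*(ε^2+r₀^2)/ε^2) + m with hE
    clear_value E
    have hEpos : 0 < E := by
      have h : 0 < π * (r₀^2*(ε^2+r₀^2)/ε^2) := by positivity
      rw [hE]; linarith
    rw [one_div, Real.log_inv, sub_neg_eq_add,
      ← Real.log_mul hEpos.ne' (by positivity : (ε^2:ℝ) ≠ 0)]
    have hEe : E * ε^2 = π * (r₀^2*(ε^2+r₀^2)) + m*ε^2 := by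
      rw [hE]; field_simp
    have hlow : aa ≤ E * ε^2 := by
      rw [hEe, haa]; nlinarith [pi_pos, sq_nonneg ε, mul_nonneg hm0 (sq_nonneg ε)]
    have hupp : E * ε^2 ≤ bb := by
      rw [hEe, hbb]
      have hε2 : ε^2 ≤ 1 := by nlinarith
      have t1 : 0 ≤ π * r₀^2 * (1 - ε^2) := mul_nonneg (by positivity) (by linarith)
      have t2 : 0 ≤ m * (1 - ε^2) := mul_nonneg hm0 (by linarith)
      nlinarith [t1, t2]
    rw [hC₂]
    exact abs_log_le aa bb _ haa0 hlow hupp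
  -- per-ε functional bound
  have hI : ∀ ε ∈ Set.Ioo (0:ℝ) 1,
      |((1 / 2) * (∫ x in Metric.ball x₀ r₀,
            16 * ‖x - x₀‖ ^ 2 / ((ε ^ 2 + ‖x - x₀‖ ^ 2) ^ 2))
          - lam * Real.log (∫ x in Ω, Real.exp
              (if x ∈ Metric.ball x₀ r₀ then
                Real.log ((ε ^ 2 + r₀ ^ 2) ^ 2 / (ε ^ 2 + ‖x - x₀‖ ^ 2) ^ 2)
               else 0)))
        - (8 * π - lam) * Real.log (1 / ε ^ 2)| ≤ C₁/2 + |lam| * C₂ := by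
    intro ε hε
    have h1 := hEN ε hε
    have h2 := hEE ε hε
    set EN := (∫ x in Metric.ball x₀ r₀,
        16 * ‖x - x₀‖ ^ 2 / ((ε ^ 2 + ‖x - x₀‖ ^ 2) ^ 2)) with hENdef
    set LE := Real.log (∫ x in Ω, Real.exp
        (if x ∈ Metric.ball x₀ r₀ then
          Real.log ((ε ^ 2 + r₀ ^ 2) ^ 2 / (ε ^ 2 + ‖x - x₀‖ ^ 2) ^ 2)
         else 0)) with hLEdef
    set L := Real.log (1 / ε ^ 2) with hLdef
    clear_value EN LE L
    have heq : (1/2) * EN - lam * LE - (8 * π - lam) * L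
        = (1/2) * (EN - 16 * π * L) - lam * (LE - L) := by ring
    rw [heq]
    calc |(1/2) * (EN - 16 * π * L) - lam * (LE - L)|
        ≤ |(1/2) * (EN - 16 * π * L)| + |lam * (LE - L)| := by
          rw [sub_eq_add_neg]
          refine (abs_add_le _ _).trans ?_
          rw [abs_neg]
      _ = (1/2) * |EN - 16 * π * L| + |lam| * |LE - L| := by
          rw [abs_mul, abs_mul]; norm_num
      _ ≤ (1/2) * C₁ + |lam| * C₂ := by
          have := mul_le_mul_of_nonneg_left h1 (by norm_num : (0:ℝ) ≤ 1/2)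
          have := mul_le_mul_of_nonneg_left h2 (abs_nonneg lam)
          linarith
      _ = C₁/2 + |lam| * C₂ := by ring
  constructor
  · refine ⟨C, hCpos, fun ε hε => ⟨?_, ?_, ?_⟩⟩
    · have := hEN ε hε
      have h2 : C₁ ≤ C := by
        have h := mul_nonneg (abs_nonneg lam) hC₂0
        linarith
      linarith
    · have := hEE ε hε
      have h2 : C₂ ≤ C := by
        have h := mul_nonneg (abs_nonneg lam) hC₂0
        linarith
      linarith
    · have := hI ε hε
      have h2 : C₁/2 + |lam| * C₂ ≤ C := by linarith
      linarith
  · intro hlam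
    have hneg : 8 * π - lam < 0 := by linarith
    have hlogL : Tendsto (fun ε : ℝ => Real.log (1 / ε ^ 2))
        (nhdsWithin 0 (Set.Ioi 0)) atTop := by
      have heq : (fun ε : ℝ => Real.log (1 / ε ^ 2))
          = fun ε => -(2 * Real.log ε) := by
        funext ε
        rw [one_div, Real.log_inv, Real.log_pow]
        norm_num
      rw [heq]
      exact tendsto_neg_atBot_atTop.comp
        (Real.tendsto_log_nhdsGT_zero.const_mul_atBot two_pos)
    have hbound : Tendsto (fun ε : ℝ =>
        (8 * π - lam) * Real.log (1 / ε ^ 2) + C)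
        (nhdsWithin 0 (Set.Ioi 0)) atBot :=
      tendsto_atBot_add_const_right _ C (hlogL.const_mul_atTop_of_neg hneg)
    refine tendsto_atBot_mono' _ ?_ hbound
    filter_upwards [Ioo_mem_nhdsGT_of_mem (by constructor <;> norm_num :
        (0:ℝ) ∈ Set.Ico (0:ℝ) 1)] with ε hε
    have := (abs_le.1 (hI ε hε)).2
    linarith
end

section
/- Let ℓ ∈ ℕ, and let β_1,…,β_ℓ > 0 be fixed. For y ∈ ℂ^ℓ, suppose z = (z_1,…,z_ℓ) ∈ ℂ^ℓ solves the system Σ_{i=1}^ℓ β_i z_i^j = y_j for j = 1,…,ℓ. Then z → 0 as y → 0; precisely, for every ε > 0 there is δ > 0 such that if |y| < δ and z solves the system, then max_i |z_i| < ε. -/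
open Complex

/-- If all weighted power sums (with positive real weights) of `z` up to order `ℓ`
vanish, then `z = 0`. -/
lemma stmt12_fiber (ℓ : ℕ) (β : Fin ℓ → ℝ) (hβ : ∀ i, 0 < β i)
    (z : Fin ℓ → ℂ) (h : ∀ j : Fin ℓ, ∑ i, (β i : ℂ) * z i ^ ((j : ℕ) + 1) = 0) :
    ∀ i, z i = 0 := by
  classical
  set T : Finset ℂ := Finset.image z Finset.univ with hT
  have hTcard : T.card ≤ ℓ := by
    calc T.card ≤ (Finset.univ : Finset (Fin ℓ)).card := Finset.card_image_le
    _ = ℓ := by simp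
  set c : ℂ → ℂ := fun w => ∑ i ∈ Finset.univ.filter (fun i => z i = w), (β i : ℂ) with hc
  have moments : ∀ p : ℕ, ∑ w ∈ T, c w * w ^ p = ∑ i, (β i : ℂ) * z i ^ p := by
    intro p
    have hmaps : ∀ i ∈ (Finset.univ : Finset (Fin ℓ)), z i ∈ T := by
      intro i _; exact Finset.mem_image_of_mem z (Finset.mem_univ i)
    rw [← Finset.sum_fiberwise_of_maps_to hmaps (fun i => (β i : ℂ) * z i ^ p)]
    refine Finset.sum_congr rfl ?_
    intro w _
    rw [hc]
    rw [Finset.sum_mul]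
    refine Finset.sum_congr rfl ?_
    intro i hi
    rw [Finset.mem_filter] at hi
    rw [hi.2]
  have zero_moments : ∀ k, k < ℓ → ∑ w ∈ T, c w * w ^ (k + 1) = 0 := by
    intro k hk
    rw [moments]
    have := h ⟨k, hk⟩
    simpa using this
  intro i0
  set w0 := z i0 with hw0def
  have hw0 : w0 ∈ T := Finset.mem_image_of_mem z (Finset.mem_univ i0)
  have hTne : T.Nonempty := ⟨w0, hw0⟩
  have hTpos : 0 < T.card := Finset.card_pos.mpr hTne
  have hinj : Set.InjOn id (T : Set ℂ) := Set.injOn_id _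
  set L := Lagrange.basis T id w0 with hL
  have hdeg : L.degree = ((T.card - 1 : ℕ) : WithBot ℕ) := Lagrange.degree_basis hinj hw0
  have hnatdeg : L.natDegree < T.card := by
    have := Polynomial.natDegree_eq_of_degree_eq_some hdeg
    omega
  have key : c w0 * w0 = ∑ w ∈ T, c w * w * Polynomial.eval w L := by
    rw [Finset.sum_eq_single w0]
    · have : Polynomial.eval w0 L = 1 := by
        have := Lagrange.eval_basis_self (F := ℂ) (s := T) (v := id) (i := w0) hinj hw0
        simpa using this
      rw [this, mul_one]
    · intro w hw hne
      have : Polynomial.eval w L = 0 := by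
        have := Lagrange.eval_basis_of_ne (F := ℂ) (s := T) (v := id) (i := w0) (j := w) (Ne.symm hne) hw
        simpa using this
      rw [this, mul_zero]
    · intro habs; exact absurd hw0 habs
  have key2 : ∑ w ∈ T, c w * w * Polynomial.eval w L = 0 := by
    have heval : ∀ w : ℂ, Polynomial.eval w L
        = ∑ k ∈ Finset.range T.card, L.coeff k * w ^ k :=
      fun w => Polynomial.eval_eq_sum_range' hnatdeg w
    calc ∑ w ∈ T, c w * w * Polynomial.eval w L
        = ∑ w ∈ T, ∑ k ∈ Finset.range T.card, L.coeff k * (c w * w ^ (k + 1)) := by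
          refine Finset.sum_congr rfl ?_
          intro w _
          rw [heval, Finset.mul_sum]
          refine Finset.sum_congr rfl ?_
          intro k _
          ring
      _ = ∑ k ∈ Finset.range T.card, L.coeff k * ∑ w ∈ T, c w * w ^ (k + 1) := by
          rw [Finset.sum_comm]
          refine Finset.sum_congr rfl ?_
          intro k _
          rw [Finset.mul_sum]
      _ = 0 := by
          refine Finset.sum_eq_zero ?_
          intro k hk
          rw [Finset.mem_range] at hk
          rw [zero_moments k (lt_of_lt_of_le hk hTcard), mul_zero]
  have hcw0 : c w0 ≠ 0 := by
    have hval : c w0 = ((∑ i ∈ Finset.univ.filter (fun i => z i = w0), β i : ℝ) : ℂ) := by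
      simp only [hc]
      push_cast
      ring
    rw [hval]
    simp only [ne_eq, Complex.ofReal_eq_zero]
    have hpos : 0 < ∑ i ∈ Finset.univ.filter (fun i => z i = w0), β i := by
      refine Finset.sum_pos (fun i _ => hβ i) ?_
      exact ⟨i0, by simp [hw0def]⟩
    exact ne_of_gt hpos
  have : c w0 * w0 = 0 := key.trans key2
  rcases mul_eq_zero.mp this with h1 | h2
  · exact absurd h1 hcw0
  · exact h2

/-- For fixed β₁,…,β_ℓ > 0, solutions z ∈ ℂ^ℓ of the weighted
power-sum system Σᵢ βᵢ zᵢʲ = yⱼ (j = 1,…,ℓ) tend to 0 as y → 0: for every ε > 0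
there is δ > 0 such that ‖y‖ < δ and z solving the system imply maxᵢ |zᵢ| < ε. -/
theorem stmt12 (ℓ : ℕ) (hℓ : 0 < ℓ) (β : Fin ℓ → ℝ) (hβ : ∀ i, 0 < β i) :
    ∀ ε > (0:ℝ), ∃ δ > (0:ℝ), ∀ y z : Fin ℓ → ℂ,
      ‖y‖ < δ →
      (∀ j : Fin ℓ, ∑ i, (β i : ℂ) * z i ^ ((j : ℕ) + 1) = y j) →
      ∀ i, ‖z i‖ < ε := by
  classical
  haveI : NeZero ℓ := ⟨by omega⟩
  -- the power-sum map and its norm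
  set f : (Fin ℓ → ℂ) → (Fin ℓ → ℂ) :=
    fun z j => ∑ i, (β i : ℂ) * z i ^ ((j : ℕ) + 1) with hf
  have hfcont : Continuous f := by
    apply continuous_pi
    intro j
    exact continuous_finset_sum _ (fun i _ => (continuous_const.mul ((continuous_apply i).pow _)))
  set F : (Fin ℓ → ℂ) → ℝ := fun u => ‖f u‖ with hF
  have hFcont : Continuous F := hfcont.norm
  -- min of F on the unit sphere
  have hScompact : IsCompact (Metric.sphere (0 : Fin ℓ → ℂ) 1) := isCompact_sphere _ _
  have hSne : (Metric.sphere (0 : Fin ℓ → ℂ) 1).Nonempty := by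
    refine ⟨fun _ => 1, ?_⟩
    simp [Metric.mem_sphere, dist_eq_norm]
  obtain ⟨u0, hu0S, hu0min⟩ := hScompact.exists_isMinOn hSne hFcont.continuousOn
  set cm := F u0 with hcm
  have hcmpos : 0 < cm := by
    rcases lt_or_eq_of_le (norm_nonneg (f u0)) with h | h
    · exact h
    · exfalso
      have hf0 : f u0 = 0 := by
        have : ‖f u0‖ = 0 := h.symm
        exact norm_eq_zero.mp this
      have : ∀ i, u0 i = 0 := by
        apply stmt12_fiber ℓ β hβ
        intro j
        have := congrFun hf0 j
        simpa [hf] using this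
      have hu0 : u0 = 0 := funext fun i => this i
      rw [Metric.mem_sphere, dist_eq_norm, sub_zero] at hu0S
      rw [hu0] at hu0S
      simp at hu0S
  intro ε hε
  set ε' := min ε 1 with hε'
  have hε'pos : 0 < ε' := lt_min hε one_pos
  have hε'le1 : ε' ≤ 1 := min_le_right _ _
  refine ⟨cm * ε' ^ ℓ, by positivity, ?_⟩
  intro y z hy hz i
  have hzi : ‖z i‖ ≤ ‖z‖ := norm_le_pi_norm z i
  have hzlt : ‖z‖ < ε' := by
    by_contra hcon
    push_neg at hcon
    set M := ‖z‖ with hM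
    have hMpos : 0 < M := lt_of_lt_of_le hε'pos hcon
    -- rescale
    set u : Fin ℓ → ℂ := (M⁻¹ : ℝ) • z with hu
    have huS : u ∈ Metric.sphere (0 : Fin ℓ → ℂ) 1 := by
      rw [Metric.mem_sphere, dist_eq_norm, sub_zero, hu, norm_smul]
      rw [Real.norm_eq_abs, abs_of_pos (inv_pos.mpr hMpos), ← hM]
      exact inv_mul_cancel₀ (ne_of_gt hMpos)
    have hFu : cm ≤ F u := hu0min huS
    -- get a coordinate where f u is at least cm
    have hj : ∃ j : Fin ℓ, cm ≤ ‖f u j‖ := by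
      by_contra hcon2
      push_neg at hcon2
      have : ‖f u‖ < cm := by
        rw [pi_norm_lt_iff hcmpos]
        intro j; exact hcon2 j
      exact absurd hFu (not_le.mpr this)
    obtain ⟨j, hjc⟩ := hj
    -- compute f u j
    have hfuj : f u j = ((M⁻¹ : ℝ) : ℂ) ^ ((j : ℕ) + 1) * y j := by
      rw [hf]
      simp only
      rw [← hz j, Finset.mul_sum]
      refine Finset.sum_congr rfl ?_
      intro k _
      have : u k = ((M⁻¹ : ℝ) : ℂ) * z k := by rw [hu]; simp [Complex.real_smul]
      rw [this, mul_pow]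
      ring
    have habs : ‖f u j‖ = (M⁻¹) ^ ((j : ℕ) + 1) * ‖y j‖ := by
      rw [hfuj, norm_mul, norm_pow, Complex.norm_real, Real.norm_eq_abs, abs_of_pos (inv_pos.mpr hMpos)]
    have hyj : ‖y j‖ ≤ ‖y‖ := norm_le_pi_norm y j
    -- cm * M^(j+1) ≤ |y j| < cm * ε'^ℓ
    have h1 : cm * M ^ ((j : ℕ) + 1) ≤ ‖y j‖ := by
      rw [habs] at hjc
      have hMpow : 0 < M ^ ((j : ℕ) + 1) := pow_pos hMpos _
      have := mul_le_mul_of_nonneg_right hjc (le_of_lt hMpow)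
      calc cm * M ^ ((j : ℕ) + 1) ≤ M⁻¹ ^ ((j : ℕ) + 1) * ‖y j‖ * M ^ ((j : ℕ) + 1) := this
        _ = ‖y j‖ := by
            rw [mul_comm (M⁻¹ ^ ((j : ℕ) + 1)) (‖y j‖), mul_assoc, ← mul_pow,
              inv_mul_cancel₀ (ne_of_gt hMpos), one_pow, mul_one]
    have h2 : cm * M ^ ((j : ℕ) + 1) < cm * ε' ^ ℓ :=
      lt_of_le_of_lt (h1.trans hyj) hy
    have h3 : M ^ ((j : ℕ) + 1) < ε' ^ ℓ := lt_of_mul_lt_mul_left h2 (le_of_lt hcmpos)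
    have h4 : ε' ^ ℓ ≤ ε' ^ ((j : ℕ) + 1) := by
      apply pow_le_pow_of_le_one (le_of_lt hε'pos) hε'le1
      exact j.2
    have h5 : ε' ^ ((j : ℕ) + 1) ≤ M ^ ((j : ℕ) + 1) :=
      pow_le_pow_left₀ (le_of_lt hε'pos) hcon _
    linarith
  exact lt_of_le_of_lt hzi (lt_of_lt_of_le hzlt (min_le_left _ _))
end

section
/- Let u : Ω → [0,∞), x₀ ∈ Ω with u(x₀) = max u, P a Borel probability measure on [0,1], and define α₀ by e^{α₀ u(x₀)} = ∫ α e^{α u(x₀)} P(dα), I = ∬_{[0,1]×Ω} e^{αu} P(dα)dx, w = α₀ u − log I, and V = (α₀ λ / I)(∫_{[0,1]} α e^{αu} P(dα)) e^{−w}. Then V(x₀) = α₀λ, ‖V‖_{L^∞(Ω)} ≤ α₀λ(∫_{[0,1]} α P(dα) + 1), and ∫_Ω V e^{w} dx ≤ α₀λ. -/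
open MeasureTheory Real

/-- With u ≥ 0 attaining its maximum on Ω at x₀, α₀ defined by
e^{α₀u(x₀)} = ∫ α e^{αu(x₀)} P(dα), I = ∬ e^{αu} P(dα)dx, w = α₀u − log I and
V = (α₀λ/I)(∫ α e^{αu} P(dα)) e^{−w}, one has V(x₀) = α₀λ,
V ≤ α₀λ(∫ α P(dα) + 1) on Ω, and ∫_Ω V e^{w} ≤ α₀λ. -/
theorem stmt19 (Ω : Set (EuclideanSpace ℝ (Fin 2))) (hΩm : MeasurableSet Ω)
    (hΩfin : volume Ω ≠ ⊤) (hΩpos : 0 < (volume Ω).toReal)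
    (P : Measure ℝ) [IsProbabilityMeasure P] (hP : P (Set.Icc 0 1) = 1)
    (lam : ℝ) (hlam : 0 < lam)
    (u : EuclideanSpace ℝ (Fin 2) → ℝ) (humeas : Measurable u)
    (hu : ∀ x, 0 ≤ u x)
    (x₀ : EuclideanSpace ℝ (Fin 2)) (hx₀ : x₀ ∈ Ω)
    (hmax : ∀ x ∈ Ω, u x ≤ u x₀)
    (hint : ∀ a ∈ Set.Icc (0:ℝ) 1,
      IntegrableOn (fun x => Real.exp (a * u x)) Ω)
    (α₀ : ℝ) (hα₀pos : 0 < α₀)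
    (hα₀ : Real.exp (α₀ * u x₀)
      = ∫ α in Set.Icc (0:ℝ) 1, α * Real.exp (α * u x₀) ∂P) :
    (α₀ * lam / (∫ a in Set.Icc (0:ℝ) 1, (∫ y in Ω, Real.exp (a * u y)) ∂P)
        * (∫ α in Set.Icc (0:ℝ) 1, α * Real.exp (α * u x₀) ∂P)
        * Real.exp (-(α₀ * u x₀
            - Real.log (∫ a in Set.Icc (0:ℝ) 1,
                (∫ y in Ω, Real.exp (a * u y)) ∂P)))
      = α₀ * lam) ∧
    (∀ x ∈ Ω,
      α₀ * lam / (∫ a in Set.Icc (0:ℝ) 1, (∫ y in Ω, Real.exp (a * u y)) ∂P)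
        * (∫ α in Set.Icc (0:ℝ) 1, α * Real.exp (α * u x) ∂P)
        * Real.exp (-(α₀ * u x
            - Real.log (∫ a in Set.Icc (0:ℝ) 1,
                (∫ y in Ω, Real.exp (a * u y)) ∂P)))
      ≤ α₀ * lam * ((∫ α in Set.Icc (0:ℝ) 1, α ∂P) + 1)) ∧
    (∫ x in Ω,
        (α₀ * lam / (∫ a in Set.Icc (0:ℝ) 1, (∫ y in Ω, Real.exp (a * u y)) ∂P)
          * (∫ α in Set.Icc (0:ℝ) 1, α * Real.exp (α * u x) ∂P)
          * Real.exp (-(α₀ * u x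
              - Real.log (∫ a in Set.Icc (0:ℝ) 1,
                  (∫ y in Ω, Real.exp (a * u y)) ∂P))))
          * Real.exp (α₀ * u x
              - Real.log (∫ a in Set.Icc (0:ℝ) 1,
                  (∫ y in Ω, Real.exp (a * u y)) ∂P)))
      ≤ α₀ * lam := by
  set S : Set ℝ := Set.Icc (0:ℝ) 1 with hS
  set I : ℝ := ∫ a in S, (∫ y in Ω, Real.exp (a * u y)) ∂P with hIdef
  -- measurability of a ↦ ∫_Ω exp(a u)
  have hmeasF : Measurable fun p : ℝ × EuclideanSpace ℝ (Fin 2) =>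
      Real.exp (p.1 * u p.2) := (measurable_fst.mul (humeas.comp measurable_snd)).exp
  have hFsm : StronglyMeasurable fun a : ℝ => ∫ y in Ω, Real.exp (a * u y) :=
    StronglyMeasurable.integral_prod_right
      (f := fun a y => Real.exp (a * u y)) hmeasF.stronglyMeasurable
  -- bounds on F
  have hC : ∀ a ∈ S, (∫ y in Ω, Real.exp (a * u y)) ≤ ∫ y in Ω, Real.exp (1 * u y) := by
    intro a ha
    refine setIntegral_mono_on (hint a ha) (hint 1 (by constructor <;> norm_num)) hΩm ?_
    intro y _
    exact Real.exp_le_exp.2 (by nlinarith [hu y, ha.1, ha.2])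
  have hFpos : ∀ a ∈ S, (volume Ω).toReal ≤ ∫ y in Ω, Real.exp (a * u y) := by
    intro a ha
    have := setIntegral_ge_of_const_le_real (c := 1) hΩm hΩfin
      (fun y _ => Real.one_le_exp (mul_nonneg ha.1 (hu y))) (hint a ha)
    rw [measureReal_def] at this
    linarith
  have hFint : IntegrableOn (fun a : ℝ => ∫ y in Ω, Real.exp (a * u y)) S P := by
    refine Integrable.mono' (g := fun _ => ∫ y in Ω, Real.exp (1 * u y))
      (integrable_const _) hFsm.aestronglyMeasurable ?_
    filter_upwards [ae_restrict_mem measurableSet_Icc] with a ha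
    rw [Real.norm_eq_abs, abs_of_nonneg (le_trans hΩpos.le (hFpos a ha))]
    exact hC a ha
  have hIpos : 0 < I := by
    have := setIntegral_ge_of_const_le_real (c := (volume Ω).toReal) measurableSet_Icc
      (measure_ne_top P S) hFpos hFint
    rw [measureReal_def, ← hS, hP] at this
    simp only [ENNReal.toReal_one, mul_one] at this
    linarith
  have hIne : I ≠ 0 := ne_of_gt hIpos
  -- exponential identity for e^{-w}
  have hw : ∀ t : ℝ, Real.exp (-(t - Real.log I)) = Real.exp (-t) * I := by
    intro t
    rw [neg_sub, Real.exp_sub, Real.exp_log hIpos, Real.exp_neg]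
    field_simp
  -- continuous functions are integrable on Icc
  have hcont : ∀ r : ℝ, IntegrableOn (fun a : ℝ => a * Real.exp (a * r)) S P := fun r =>
    ContinuousOn.integrableOn_compact isCompact_Icc
      ((continuous_id.mul ((continuous_id.mul continuous_const).rexp)).continuousOn)
  have hcont2 : ∀ r : ℝ, IntegrableOn (fun a : ℝ => Real.exp (a * r)) S P := fun r =>
    ContinuousOn.integrableOn_compact isCompact_Icc
      (((continuous_id.mul continuous_const).rexp).continuousOn)
  have haint : IntegrableOn (fun a : ℝ => a) S P :=
    ContinuousOn.integrableOn_compact isCompact_Icc continuous_id.continuousOn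
  refine ⟨?_, ?_, ?_⟩
  · -- Part 1
    rw [← hα₀, hw]
    have h1 : Real.exp (α₀ * u x₀) * (Real.exp (-(α₀ * u x₀)) * I) = I := by
      rw [← mul_assoc, ← Real.exp_add]; simp
    rw [mul_assoc, h1]
    exact div_mul_cancel₀ _ hIne
  · -- Part 2
    intro x hx
    have key : (∫ α in S, α * Real.exp (α * u x) ∂P) * Real.exp (-(α₀ * u x))
        ≤ (∫ α in S, α ∂P) + 1 := by
      rw [← integral_mul_const]
      have h1 : ∫ α in S, α * Real.exp (α * u x) * Real.exp (-(α₀ * u x)) ∂P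
          ≤ ∫ α in S, (α + α * Real.exp (α * u x₀) * Real.exp (-(α₀ * u x₀))) ∂P := by
        refine setIntegral_mono_on ((hcont (u x)).mul_const _) ?_ measurableSet_Icc ?_
        · exact haint.add ((hcont (u x₀)).mul_const _)
        · intro a ha
          obtain ⟨ha0, ha1⟩ := ha
          rw [mul_assoc, ← Real.exp_add, mul_assoc, ← Real.exp_add]
          rcases le_total a α₀ with hca | hca
          · have h2 : a * u x + -(α₀ * u x) ≤ 0 := by nlinarith [hu x]
            have h3 : Real.exp (a * u x + -(α₀ * u x)) ≤ 1 := Real.exp_le_one_iff.2 h2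
            nlinarith [Real.exp_pos (a * u x₀ + -(α₀ * u x₀)),
              Real.exp_pos (a * u x + -(α₀ * u x))]
          · have h2 : a * u x + -(α₀ * u x) ≤ a * u x₀ + -(α₀ * u x₀) := by
              have := hmax x hx
              nlinarith [hu x]
            have h3 := Real.exp_le_exp.2 h2
            nlinarith [Real.exp_pos (a * u x₀ + -(α₀ * u x₀)),
              Real.exp_pos (a * u x + -(α₀ * u x))]
      have h2 : ∫ α in S, (α + α * Real.exp (α * u x₀) * Real.exp (-(α₀ * u x₀))) ∂P
          = (∫ α in S, α ∂P) + 1 := by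
        rw [integral_add haint ((hcont (u x₀)).mul_const _)]
        congr 1
        rw [integral_mul_const, ← hα₀, ← Real.exp_add]
        simp
      linarith
    rw [hw]
    have heq : α₀ * lam / I * (∫ α in S, α * Real.exp (α * u x) ∂P)
        * (Real.exp (-(α₀ * u x)) * I)
        = (α₀ * lam) * ((∫ α in S, α * Real.exp (α * u x) ∂P) * Real.exp (-(α₀ * u x))) := by
      generalize (∫ α in S, α * Real.exp (α * u x) ∂P) = J
      field_simp
    rw [heq]
    exact mul_le_mul_of_nonneg_left key (by positivity)
  · -- Part 3
    have hcancel : ∀ x : EuclideanSpace ℝ (Fin 2),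
        (α₀ * lam / I * (∫ α in S, α * Real.exp (α * u x) ∂P)
          * Real.exp (-(α₀ * u x - Real.log I)))
          * Real.exp (α₀ * u x - Real.log I)
        = α₀ * lam / I * (∫ α in S, α * Real.exp (α * u x) ∂P) := by
      intro x
      rw [mul_assoc, ← Real.exp_add, neg_add_cancel, Real.exp_zero, mul_one]
    simp only [hcancel]
    -- measurability of x ↦ J x  and x ↦ F' x
    have hmeasJ : Measurable fun p : EuclideanSpace ℝ (Fin 2) × ℝ =>
        p.2 * Real.exp (p.2 * u p.1) :=
      measurable_snd.mul ((measurable_snd.mul (humeas.comp measurable_fst)).exp)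
    have hmeasE : Measurable fun p : EuclideanSpace ℝ (Fin 2) × ℝ =>
        Real.exp (p.2 * u p.1) :=
      ((measurable_snd.mul (humeas.comp measurable_fst)).exp)
    have hJsm : StronglyMeasurable fun x => ∫ α in S, α * Real.exp (α * u x) ∂P :=
      StronglyMeasurable.integral_prod_right
        (f := fun x a => a * Real.exp (a * u x)) hmeasJ.stronglyMeasurable
    have hEsm : StronglyMeasurable fun x => ∫ α in S, Real.exp (α * u x) ∂P :=
      StronglyMeasurable.integral_prod_right
        (f := fun x a => Real.exp (a * u x)) hmeasE.stronglyMeasurable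
    have h1exp : IntegrableOn (fun x => Real.exp (1 * u x)) Ω volume :=
      hint 1 (by constructor <;> norm_num)
    -- bound |J x| ≤ exp (1 * u x)
    have hJbound : ∀ x, |∫ α in S, α * Real.exp (α * u x) ∂P| ≤ Real.exp (1 * u x) := by
      intro x
      have h1 : |∫ α in S, α * Real.exp (α * u x) ∂P|
          ≤ ∫ α in S, |α * Real.exp (α * u x)| ∂P := by
        simpa only [Real.norm_eq_abs] using
          norm_integral_le_integral_norm (μ := P.restrict S)
            (f := fun α : ℝ => α * Real.exp (α * u x))
      have h2 : ∫ α in S, |α * Real.exp (α * u x)| ∂P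
          ≤ ∫ α in S, Real.exp (1 * u x) ∂P := by
        refine setIntegral_mono_on (hcont (u x)).abs (integrableOn_const ?_)
          measurableSet_Icc ?_
        · rw [hP]; norm_num
        · intro a ha
          obtain ⟨ha0, ha1⟩ := ha
          rw [abs_of_nonneg (mul_nonneg ha0 (Real.exp_pos _).le)]
          have h3 : Real.exp (a * u x) ≤ Real.exp (1 * u x) :=
            Real.exp_le_exp.2 (by nlinarith [hu x])
          nlinarith [Real.exp_pos (a * u x)]
      have h3 : ∫ α in S, Real.exp (1 * u x) ∂P = Real.exp (1 * u x) := by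
        rw [setIntegral_const, measureReal_def, hP]; simp
      linarith
    have hEbound : ∀ x, |∫ α in S, Real.exp (α * u x) ∂P| ≤ Real.exp (1 * u x) := by
      intro x
      have h1 : |∫ α in S, Real.exp (α * u x) ∂P|
          ≤ ∫ α in S, |Real.exp (α * u x)| ∂P := by
        simpa only [Real.norm_eq_abs] using
          norm_integral_le_integral_norm (μ := P.restrict S)
            (f := fun α : ℝ => Real.exp (α * u x))
      have h2 : ∫ α in S, |Real.exp (α * u x)| ∂P
          ≤ ∫ α in S, Real.exp (1 * u x) ∂P := by
        refine setIntegral_mono_on (hcont2 (u x)).abs (integrableOn_const ?_)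
          measurableSet_Icc ?_
        · rw [hP]; norm_num
        · intro a ha
          obtain ⟨ha0, ha1⟩ := ha
          rw [abs_of_nonneg (Real.exp_pos _).le]
          exact Real.exp_le_exp.2 (by nlinarith [hu x])
      have h3 : ∫ α in S, Real.exp (1 * u x) ∂P = Real.exp (1 * u x) := by
        rw [setIntegral_const, measureReal_def, hP]; simp
      linarith
    have hJint : IntegrableOn (fun x => ∫ α in S, α * Real.exp (α * u x) ∂P) Ω volume := by
      refine Integrable.mono' h1exp hJsm.aestronglyMeasurable ?_
      exact ae_of_all _ fun x => by rw [Real.norm_eq_abs]; exact hJbound x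
    have hEint : IntegrableOn (fun x => ∫ α in S, Real.exp (α * u x) ∂P) Ω volume := by
      refine Integrable.mono' h1exp hEsm.aestronglyMeasurable ?_
      exact ae_of_all _ fun x => by rw [Real.norm_eq_abs]; exact hEbound x
    -- Fubini : ∫_Ω F' = I
    have hprod : Integrable (fun p : EuclideanSpace ℝ (Fin 2) × ℝ =>
        Real.exp (p.2 * u p.1)) ((volume.restrict Ω).prod (P.restrict S)) := by
      rw [integrable_prod_iff hmeasE.aestronglyMeasurable]
      constructor
      · exact ae_of_all _ fun x => hcont2 (u x)
      · refine Integrable.mono' h1exp ?_ ?_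
        · have : StronglyMeasurable fun x => ∫ α in S, ‖Real.exp (α * u x)‖ ∂P :=
            StronglyMeasurable.integral_prod_right
              (f := fun x a => ‖Real.exp (a * u x)‖) hmeasE.norm.stronglyMeasurable
          exact this.aestronglyMeasurable
        · refine ae_of_all _ fun x => ?_
          rw [Real.norm_eq_abs]
          have : (∫ α in S, ‖Real.exp (α * u x)‖ ∂P) = ∫ α in S, |Real.exp (α * u x)| ∂P := by
            simp [Real.norm_eq_abs]
          rw [this, abs_of_nonneg (integral_nonneg fun a => abs_nonneg _)]
          have h2 : ∫ α in S, |Real.exp (α * u x)| ∂P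
              ≤ ∫ α in S, Real.exp (1 * u x) ∂P := by
            refine setIntegral_mono_on (hcont2 (u x)).abs (integrableOn_const ?_)
              measurableSet_Icc ?_
            · rw [hP]; norm_num
            · intro a ha
              obtain ⟨ha0, ha1⟩ := ha
              rw [abs_of_nonneg (Real.exp_pos _).le]
              exact Real.exp_le_exp.2 (by nlinarith [hu x])
          have h3 : ∫ α in S, Real.exp (1 * u x) ∂P = Real.exp (1 * u x) := by
            rw [setIntegral_const, measureReal_def, hP]; simp
          linarith
    have hfub : (∫ x in Ω, (∫ α in S, Real.exp (α * u x) ∂P)) = I := by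
      rw [hIdef]
      exact integral_integral_swap (f := fun x a => Real.exp (a * u x)) hprod
    -- J x ≤ F' x pointwise
    have hJleE : ∀ x, (∫ α in S, α * Real.exp (α * u x) ∂P)
        ≤ ∫ α in S, Real.exp (α * u x) ∂P := by
      intro x
      refine setIntegral_mono_on (hcont (u x)) (hcont2 (u x)) measurableSet_Icc ?_
      intro a ha
      obtain ⟨ha0, ha1⟩ := ha
      nlinarith [Real.exp_pos (a * u x)]
    have hmain : (∫ x in Ω, (∫ α in S, α * Real.exp (α * u x) ∂P)) ≤ I := by
      calc (∫ x in Ω, (∫ α in S, α * Real.exp (α * u x) ∂P))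
          ≤ ∫ x in Ω, (∫ α in S, Real.exp (α * u x) ∂P) :=
            setIntegral_mono_on hJint hEint hΩm fun x _ => hJleE x
        _ = I := hfub
    calc ∫ x in Ω, α₀ * lam / I * (∫ α in S, α * Real.exp (α * u x) ∂P)
        = α₀ * lam / I * ∫ x in Ω, (∫ α in S, α * Real.exp (α * u x) ∂P) := by
          rw [integral_const_mul]
      _ ≤ α₀ * lam / I * I := mul_le_mul_of_nonneg_left hmain (by positivity)
      _ = α₀ * lam := div_mul_cancel₀ _ hIne
end
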